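/- Let G and H be subgroups of the additive reals. There exists a strictly order preserving group homomorphism from G to H if and only if for every X ∈ A_G there exists Y ∈ A_H with X ⊆ Y, where A_G = { G/r : r ∈ G \ {0} } and A_H = { H/s : s ∈ H \ {0} }. -/
import Mathlib

def divSet (G : AddSubgroup ℝ) (r : ℝ) : Set ℝ := {x | ∃ g ∈ G, x = g / r}

def AInv (G : AddSubgroup ℝ) : Set (Set ℝ) := {S | ∃ r ∈ G, r ≠ 0 ∧ S = divSet G r}

lemma divSet_neg (G : AddSubgroup ℝ) (r : ℝ) : divSet G r = divSet G (-r) := by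
  ext x
  constructor
  · rintro ⟨g, hg, rfl⟩
    exact ⟨-g, G.neg_mem hg, by rw [neg_div_neg_eq]⟩
  · rintro ⟨g, hg, rfl⟩
    exact ⟨-g, G.neg_mem hg, by rw [neg_div, div_neg]⟩

lemma hion (G : AddSubgroup ℝ) (ψ : G →+ ℝ)
    (mono : ∀ a b : G, (a : ℝ) < (b : ℝ) → ψ a < ψ b)
    (r : G) (hr : (0:ℝ) < (r:ℝ)) (g : G) : ψ g * (r:ℝ) = (g:ℝ) * ψ r := by
  have hψr : 0 < ψ r := by
    have := mono 0 r (by simpa using hr)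
    simpa using this
  by_contra h
  have key : ∀ (n : ℤ) (m : ℕ), 0 < m → (n : ℝ) * r < (m : ℝ) * g →
      (n : ℝ) * ψ r < (m : ℝ) * ψ g := by
    intro n m hm hlt
    have h1 : ((n • r : G) : ℝ) < ((((m:ℤ)) • g : G) : ℝ) := by
      push_cast
      simpa using hlt
    have := mono _ _ h1
    rw [map_zsmul, map_zsmul] at this
    push_cast at this
    simpa using this
  have key2 : ∀ (n : ℤ) (m : ℕ), 0 < m → (m : ℝ) * g < (n : ℝ) * r →
      (m : ℝ) * ψ g < (n : ℝ) * ψ r := by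
    intro n m hm hlt
    have h1 : ((((m:ℤ)) • g : G) : ℝ) < ((n • r : G) : ℝ) := by
      push_cast
      simpa using hlt
    have := mono _ _ h1
    rw [map_zsmul, map_zsmul] at this
    push_cast at this
    simpa using this
  rcases lt_or_gt_of_ne h with hlt | hgt
  · -- ψ g * r < g * ψ r, i.e. ψ g / ψ r < g / r
    have h1 : ψ g / ψ r < (g:ℝ) / r := by
      rw [div_lt_div_iff₀ hψr hr]; linarith
    obtain ⟨q, hq1, hq2⟩ := exists_rat_btwn h1
    rw [Rat.cast_def] at hq1 hq2
    have hden : (0:ℝ) < (q.den : ℝ) := by positivity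
    have ha : (q.num : ℝ) * r < (q.den : ℝ) * g := by
      rw [div_lt_div_iff₀ hden hr] at hq2; linarith
    have hb := key q.num q.den q.pos ha
    rw [div_lt_div_iff₀ hψr hden] at hq1
    linarith
  · have h1 : (g:ℝ) / r < ψ g / ψ r := by
      rw [div_lt_div_iff₀ hr hψr]; linarith
    obtain ⟨q, hq1, hq2⟩ := exists_rat_btwn h1
    rw [Rat.cast_def] at hq1 hq2
    have hden : (0:ℝ) < (q.den : ℝ) := by positivity
    have ha : (q.num : ℝ) * ψ r < (q.den : ℝ) * ψ g := by
      rw [div_lt_div_iff₀ hden hψr] at hq2; linarith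
    rw [div_lt_div_iff₀ hr hden] at hq1
    have hb := key2 q.num q.den q.pos (by linarith)
    linarith

/-- There is a strictly order preserving group homomorphism `G → H` iff every
member of `A_G` is contained in a member of `A_H`. -/
theorem stmt_5 (G H : AddSubgroup ℝ) (hG : G ≠ ⊥) (hH : H ≠ ⊥) :
    (∃ φ : G → H, (∀ a b : G, φ (a + b) = φ a + φ b) ∧
      ∀ a b : G, (a : ℝ) < (b : ℝ) → (φ a : ℝ) < (φ b : ℝ)) ↔
    ∀ X ∈ AInv G, ∃ Y ∈ AInv H, X ⊆ Y := by
  constructor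
  · rintro ⟨φ, hadd, hmono⟩ X ⟨r, hrG, hr0, rfl⟩
    set ψ : G →+ ℝ := AddMonoidHom.mk' (fun a => ((φ a : H) : ℝ))
      (fun a b => by show ((φ (a+b) : H) : ℝ) = _; rw [hadd]; push_cast; ring) with hψ
    have hmono' : ∀ a b : G, (a : ℝ) < (b : ℝ) → ψ a < ψ b := fun a b hab => by
      simpa [hψ] using hmono a b hab
    -- reduce to positive r
    suffices hpos : ∀ r' : G, (0:ℝ) < (r':ℝ) → ∃ Y ∈ AInv H, divSet G (r':ℝ) ⊆ Y by
      rcases lt_or_gt_of_ne hr0 with hneg | hposr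
      · obtain ⟨Y, hY, hsub⟩ := hpos ⟨-r, G.neg_mem hrG⟩ (by simpa using neg_pos.mpr hneg)
        exact ⟨Y, hY, by rw [divSet_neg]; simpa using hsub⟩
      · exact hpos ⟨r, hrG⟩ hposr
    intro r' hr'
    have hψr : 0 < ψ r' := by
      have := hmono' 0 r' (by simpa using hr')
      simpa using this
    refine ⟨divSet H (ψ r'), ⟨ψ r', (φ r').2, ne_of_gt hψr, rfl⟩, ?_⟩
    rintro x ⟨g, hg, rfl⟩
    refine ⟨ψ ⟨g, hg⟩, (φ ⟨g, hg⟩).2, ?_⟩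
    have := hion G ψ hmono' r' hr' ⟨g, hg⟩
    rw [div_eq_div_iff (ne_of_gt hr') (ne_of_gt hψr)]
    simp only [AddSubgroup.coe_mk] at this ⊢
    linarith [this]
  · intro hA
    obtain ⟨⟨r, hrG⟩, hr0⟩ := AddSubgroup.ne_bot_iff_exists_ne_zero.mp hG
    have hr0' : r ≠ 0 := fun h => hr0 (Subtype.ext h)
    -- get positive r
    obtain ⟨r, hrG, hrpos⟩ : ∃ r ∈ G, (0:ℝ) < r := by
      rcases lt_or_gt_of_ne hr0' with hneg | hposr
      · exact ⟨-r, G.neg_mem hrG, by linarith⟩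
      · exact ⟨r, hrG, hposr⟩
    obtain ⟨Y, ⟨s, hsH, hs0, rfl⟩, hsub⟩ := hA (divSet G r) ⟨r, hrG, ne_of_gt hrpos, rfl⟩
    obtain ⟨s, hsH, hspos, hsub⟩ : ∃ s ∈ H, (0:ℝ) < s ∧ divSet G r ⊆ divSet H s := by
      rcases lt_or_gt_of_ne hs0 with hneg | hposr
      · exact ⟨-s, H.neg_mem hsH, by linarith, by rw [← divSet_neg]; exact hsub⟩
      · exact ⟨s, hsH, hposr, hsub⟩
    have hmem : ∀ g ∈ G, g * s / r ∈ H := by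
      intro g hg
      obtain ⟨h, hh, he⟩ := hsub ⟨g, hg, rfl⟩
      have : h = g * s / r := by
        field_simp at he
        field_simp
        linarith
      rwa [this] at hh
    refine ⟨fun g => ⟨(g:ℝ) * s / r, hmem g g.2⟩, fun a b => ?_, fun a b hab => ?_⟩
    · apply Subtype.ext
      push_cast
      ring
    · simp only
      rw [div_lt_div_iff_of_pos_right hrpos]
      exact mul_lt_mul_of_pos_right hab hspos
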